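/- Let n be odd. Consider the generalized n-gene repressilator in which each transcription-rate function has the successive-binding form a_i(p) = ḡ_i[(1 − δ_i)(∏_{j=1}^{m_i} K_{i,j})/B_i(p) + δ_i], where B_i(p) = Σ_{j=0}^{m_i} (∏_{ℓ=j+1}^{m_i} K_{i,ℓ}) p^j, with m_i ≥ 1, K_{i,j} > 0, ḡ_i > 0, and 0 ≤ δ_i < 1, and in which the degradation-rate and translation-rate functions satisfy (D1)–(D3) and assumption (A6) holds. Then the system has exactly one steady state in (0,∞)^{2n} (the central steady state E_C exists and is the unique positive steady state). -/

import Mathlib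

open Fin.NatCast

section RepressilatorAux

lemma exists_pos_preimage {f : ℝ → ℝ} (hc : ContinuousOn f (Set.Ici 0))
    (h0 : f 0 = 0) {v X : ℝ}
    (hv : 0 < v) (hX : 0 ≤ X) (hvX : v < f X) : ∃ y, 0 < y ∧ f y = v := by
  have h := intermediate_value_Icc hX (hc.mono Set.Icc_subset_Ici_self)
  have hvmem : v ∈ Set.Icc (f 0) (f X) := ⟨by rw [h0]; exact hv.le, hvX.le⟩
  obtain ⟨y, hy, hfy⟩ := h hvmem
  refine ⟨y, ?_, hfy⟩
  rcases eq_or_lt_of_le hy.1 with h' | h'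
  · exfalso
    rw [← h', h0] at hfy
    exact hv.ne hfy
  · exact h'

lemma continuousOn_inv_comp {f φ g : ℝ → ℝ} {s : Set ℝ}
    (hm : StrictMonoOn f (Set.Ici 0)) (hφ : ∀ x ∈ s, 0 < φ x)
    (hfφ : ∀ x ∈ s, f (φ x) = g x) (hg : ContinuousOn g s) :
    ContinuousOn φ s := by
  intro x hx
  have hy : 0 < φ x := hφ x hx
  rw [ContinuousWithinAt, Metric.tendsto_nhds]
  intro ε hε
  set ε' := min ε (φ x) with hε'
  have hε'pos : 0 < ε' := lt_min hε hy
  have hε'le : ε' ≤ φ x := min_le_right _ _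
  have hmem1 : φ x - ε' ∈ Set.Ici (0:ℝ) := by simp only [Set.mem_Ici]; linarith
  have hmem2 : φ x ∈ Set.Ici (0:ℝ) := le_of_lt hy
  have hmem3 : φ x + ε' ∈ Set.Ici (0:ℝ) := by simp only [Set.mem_Ici]; linarith
  have h1 : f (φ x - ε') < g x := by
    rw [← hfφ x hx]; exact hm hmem1 hmem2 (by linarith)
  have h2 : g x < f (φ x + ε') := by
    rw [← hfφ x hx]; exact hm hmem2 hmem3 (by linarith)
  have hnb : Set.Ioo (f (φ x - ε')) (f (φ x + ε')) ∈ nhds (g x) := Ioo_mem_nhds h1 h2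
  filter_upwards [hg x hx hnb, self_mem_nhdsWithin] with z hz1 hz2
  have hz3 : f (φ z) = g z := hfφ z hz2
  have hz4 : 0 < φ z := hφ z hz2
  have hlow : φ x - ε' < φ z := by
    by_contra hcon
    push_neg at hcon
    have := hm.monotoneOn (le_of_lt hz4) hmem1 hcon
    rw [hz3] at this
    exact absurd hz1.1 (not_lt.mpr this)
  have hhigh : φ z < φ x + ε' := by
    by_contra hcon
    push_neg at hcon
    have := hm.monotoneOn hmem3 (le_of_lt hz4) hcon
    rw [hz3] at this
    exact absurd hz1.2 (not_lt.mpr this)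
  rw [Real.dist_eq, abs_sub_lt_iff]
  constructor <;> linarith [min_le_left ε (φ x)]

open Classical in
noncomputable def pInv (f : ℝ → ℝ) (v : ℝ) : ℝ :=
  if h : ∃ y, 0 < y ∧ f y = v then h.choose else 1

open Classical in
lemma pInv_spec {f : ℝ → ℝ} {v : ℝ} (h : ∃ y, 0 < y ∧ f y = v) :
    0 < pInv f v ∧ f (pInv f v) = v := by
  rw [pInv, dif_pos h]
  exact h.choose_spec

def iterChain (n : ℕ) [NeZero n] (P : Fin n → ℝ → ℝ) : ℕ → ℝ → ℝ
  | 0 => id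
  | (j+1) => fun x => P (j : Fin n) (iterChain n P j x)

lemma fin_sub_one_val (n : ℕ) [NeZero n] (i : Fin n) :
    ((i - 1 : Fin n) : ℕ) = if (i : ℕ) = 0 then n - 1 else (i : ℕ) - 1 := by
  have hn : 0 < n := Nat.pos_of_ne_zero (NeZero.ne n)
  have h1 : ((i - 1 : Fin n) : ℕ) = (n - (1 : Fin n).val + (i : ℕ)) % n := by rw [Fin.sub_def]
  have hv1 : ((1 : Fin n) : ℕ) = 1 % n := Fin.val_one' n
  rcases Nat.lt_or_ge 1 n with h2 | h2
  · have hv1' : ((1 : Fin n) : ℕ) = 1 := by rw [hv1]; exact Nat.mod_eq_of_lt h2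
    rw [h1, hv1']
    by_cases hi : (i : ℕ) = 0
    · rw [if_pos hi, hi]
      simp only [Nat.add_zero]
      exact Nat.mod_eq_of_lt (by omega)
    · rw [if_neg hi]
      have hiv : (i : ℕ) < n := i.isLt
      have h3 : n - 1 + (i : ℕ) = ((i : ℕ) - 1) + n := by omega
      rw [h3, Nat.add_mod_right]
      exact Nat.mod_eq_of_lt (by omega)
  · have hn1 : n = 1 := by omega
    have hi0 : (i : ℕ) = 0 := by have := i.isLt; omega
    have hj : ((i - 1 : Fin n) : ℕ) = 0 := by have := (i - 1 : Fin n).isLt; omega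
    rw [hj, if_pos hi0, hn1]

end RepressilatorAux

/-- A steady state of the generalized `n`-gene repressilator. -/
def IsSteadyState (n : ℕ) [NeZero n] (a dr dp k : Fin n → ℝ → ℝ)
    (r p : Fin n → ℝ) : Prop :=
  (∀ i, 0 < r i) ∧ (∀ i, 0 < p i) ∧
    (∀ i, dr i (r i) = a i (p (i - 1))) ∧ (∀ i, dp i (p i) = k i (r i))

/-- For `n` odd, the generalized `n`-gene repressilator in which each
transcription-rate function has the successive-binding form
`a_i(p) = ḡ_i[(1−δ_i)(∏_{j=1}^{m_i} K_{i,j})/B_i(p) + δ_i]`, with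
`B_i(p) = Σ_{j=0}^{m_i} (∏_{ℓ=j+1}^{m_i} K_{i,ℓ}) p^j`, `m_i ≥ 1`, `K_{i,j} > 0`,
`ḡ_i > 0`, `0 ≤ δ_i < 1`, whose degradation- and translation-rate functions
satisfy (D1)–(D3), and for which assumption (A6) holds, has exactly one steady
state in `(0,∞)^{2n}` (the central steady state `E_C`). -/
theorem successive_binding_unique_steady_state (n : ℕ) [NeZero n] (hn : Odd n)
    (m : Fin n → ℕ) (hm : ∀ i, 1 ≤ m i)
    (K : Fin n → ℕ → ℝ) (hK : ∀ i ℓ, 1 ≤ ℓ → ℓ ≤ m i → 0 < K i ℓ)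
    (g δ : Fin n → ℝ) (hg : ∀ i, 0 < g i) (hδ0 : ∀ i, 0 ≤ δ i) (hδ1 : ∀ i, δ i < 1)
    (a dr dp k : Fin n → ℝ → ℝ)
    -- each `a i` is the successive-binding transcription-rate function
    (ha : ∀ i p, a i p = g i * ((1 - δ i) * (∏ ℓ ∈ Finset.Icc 1 (m i), K i ℓ) /
      (∑ j ∈ Finset.range (m i + 1), (∏ ℓ ∈ Finset.Icc (j + 1) (m i), K i ℓ) * p ^ j)
      + δ i))
    -- (D1)–(D3)
    (hD1 : ∀ i, ContDiffOn ℝ 1 (dr i) (Set.Ici 0) ∧ ContDiffOn ℝ 1 (dp i) (Set.Ici 0) ∧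
      ContDiffOn ℝ 1 (k i) (Set.Ici 0))
    (hD2 : ∀ i, dr i 0 = 0 ∧ dp i 0 = 0 ∧ k i 0 = 0)
    (hD3 : ∀ i, StrictMonoOn (dr i) (Set.Ici 0) ∧ StrictMonoOn (dp i) (Set.Ici 0) ∧
      StrictMonoOn (k i) (Set.Ici 0))
    -- `rbar i` is the unique point in `(0,∞)` with `dr i (rbar i) = a i 0`
    (rbar : Fin n → ℝ) (hrbar_pos : ∀ i, 0 < rbar i)
    (hrbar : ∀ i, dr i (rbar i) = a i 0)
    -- (A6)
    (hA6 : ∀ i, (∃ x ≥ (0 : ℝ), dr i x > a i 0) ∧ (∃ x ≥ (0 : ℝ), dp i x > k i (rbar i))) :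
    ∃! rp : (Fin n → ℝ) × (Fin n → ℝ), IsSteadyState n a dr dp k rp.1 rp.2 := by
  classical
  have npos : 0 < n := Nat.pos_of_ne_zero (NeZero.ne n)
  -- order-reflection helpers
  have hinj : ∀ (f : ℝ → ℝ), StrictMonoOn f (Set.Ici 0) → ∀ {y z : ℝ}, 0 ≤ y → 0 ≤ z →
      f y = f z → y = z := by
    intro f hf y z hy hz hfy
    exact hf.injOn hy hz hfy
  have hltr : ∀ (f : ℝ → ℝ), StrictMonoOn f (Set.Ici 0) → ∀ {y z : ℝ}, 0 ≤ y → 0 ≤ z →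
      f y < f z → y < z := by
    intro f hf y z hy hz hfy
    by_contra hcon
    push_neg at hcon
    exact absurd (hf.monotoneOn hz hy hcon) (not_le.mpr hfy)
  have hler : ∀ (f : ℝ → ℝ), StrictMonoOn f (Set.Ici 0) → ∀ {y z : ℝ}, 0 ≤ y → 0 ≤ z →
      f y ≤ f z → y ≤ z := by
    intro f hf y z hy hz hfy
    by_contra hcon
    push_neg at hcon
    exact absurd (hf hz hy hcon) (not_lt.mpr hfy)
  -- facts about the polynomial B and the function a
  have hCpos : ∀ i, 0 < ∏ ℓ ∈ Finset.Icc 1 (m i), K i ℓ := by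
    intro i
    refine Finset.prod_pos fun ℓ hℓ => ?_
    rw [Finset.mem_Icc] at hℓ
    exact hK i ℓ hℓ.1 hℓ.2
  have hcoeff : ∀ i j, 0 < ∏ ℓ ∈ Finset.Icc (j + 1) (m i), K i ℓ := by
    intro i j
    refine Finset.prod_pos fun ℓ hℓ => ?_
    rw [Finset.mem_Icc] at hℓ
    exact hK i ℓ (by omega) hℓ.2
  have hBpos : ∀ i x, 0 ≤ x →
      0 < ∑ j ∈ Finset.range (m i + 1), (∏ ℓ ∈ Finset.Icc (j + 1) (m i), K i ℓ) * x ^ j := by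
    intro i x hx
    refine Finset.sum_pos' (fun j _ => mul_nonneg (hcoeff i j).le (pow_nonneg hx j))
      ⟨0, Finset.mem_range.mpr (by omega), ?_⟩
    simpa using hcoeff i 0
  have hBmono : ∀ i x y, 0 ≤ x → x < y →
      (∑ j ∈ Finset.range (m i + 1), (∏ ℓ ∈ Finset.Icc (j + 1) (m i), K i ℓ) * x ^ j) <
      (∑ j ∈ Finset.range (m i + 1), (∏ ℓ ∈ Finset.Icc (j + 1) (m i), K i ℓ) * y ^ j) := by
    intro i x y hx hxy
    refine Finset.sum_lt_sum
      (fun j _ => mul_le_mul_of_nonneg_left (pow_le_pow_left₀ hx hxy.le j) (hcoeff i j).le)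
      ⟨m i, Finset.self_mem_range_succ (m i), ?_⟩
    have hem : Finset.Icc (m i + 1) (m i) = ∅ := Finset.Icc_eq_empty (by omega)
    rw [hem]
    simp only [Finset.prod_empty, one_mul]
    exact pow_lt_pow_left₀ hxy hx (by have := hm i; omega)
  have hapos : ∀ i x, 0 ≤ x → 0 < a i x := by
    intro i x hx
    rw [ha]
    have h1 : 0 < (1 - δ i) * (∏ ℓ ∈ Finset.Icc 1 (m i), K i ℓ) /
        (∑ j ∈ Finset.range (m i + 1), (∏ ℓ ∈ Finset.Icc (j + 1) (m i), K i ℓ) * x ^ j) :=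
      div_pos (mul_pos (by linarith [hδ1 i]) (hCpos i)) (hBpos i x hx)
    have h2 := hδ0 i
    exact mul_pos (hg i) (by linarith)
  have haanti : ∀ i x y, 0 ≤ x → x < y → a i y < a i x := by
    intro i x y hx hxy
    rw [ha i x, ha i y]
    have hB := hBmono i x y hx hxy
    have h1 := div_lt_div_of_pos_left (mul_pos (by linarith [hδ1 i] : (0:ℝ) < 1 - δ i) (hCpos i))
      (hBpos i x hx) hB
    exact mul_lt_mul_of_pos_left (by linarith) (hg i)
  have hale : ∀ i x, 0 ≤ x → a i x ≤ a i 0 := by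
    intro i x hx
    rcases eq_or_lt_of_le hx with h | h
    · rw [← h]
    · exact (haanti i 0 x le_rfl h).le
  have hacont : ∀ i, ContinuousOn (a i) (Set.Ici 0) := by
    intro i
    have hc : ContinuousOn (fun x : ℝ => g i * ((1 - δ i) * (∏ ℓ ∈ Finset.Icc 1 (m i), K i ℓ) /
        (∑ j ∈ Finset.range (m i + 1), (∏ ℓ ∈ Finset.Icc (j + 1) (m i), K i ℓ) * x ^ j)
        + δ i)) (Set.Ici 0) := by
      refine ContinuousOn.mul continuousOn_const (ContinuousOn.add ?_ continuousOn_const)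
      refine ContinuousOn.div continuousOn_const ?_ (fun x hx => (hBpos i x hx).ne')
      exact (continuous_finset_sum _ fun j _ => continuous_const.mul (continuous_pow j)).continuousOn
    exact hc.congr fun x _ => ha i x
  -- the inverse map R
  have hRspec : ∀ i x, 0 ≤ x → ∃ y, 0 < y ∧ dr i y = a i x := by
    intro i x hx
    obtain ⟨X, hX0, hXv⟩ := (hA6 i).1
    exact exists_pos_preimage (hD1 i).1.continuousOn (hD2 i).1 (hapos i x hx) hX0
      (lt_of_le_of_lt (hale i x hx) hXv)
  obtain ⟨R, hRprop⟩ : ∃ R : Fin n → ℝ → ℝ, ∀ i x, 0 ≤ x →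
      0 < R i x ∧ dr i (R i x) = a i x :=
    ⟨fun i x => pInv (dr i) (a i x), fun i x hx => pInv_spec (hRspec i x hx)⟩
  have hRle : ∀ i x, 0 ≤ x → R i x ≤ rbar i := by
    intro i x hx
    refine hler (dr i) (hD3 i).1 (hRprop i x hx).1.le (hrbar_pos i).le ?_
    rw [(hRprop i x hx).2, hrbar i]
    exact hale i x hx
  have hkpos : ∀ i x, 0 ≤ x → 0 < k i (R i x) := by
    intro i x hx
    have h1 := (hD3 i).2.2 Set.self_mem_Ici (Set.mem_Ici.mpr (hRprop i x hx).1.le) (hRprop i x hx).1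
    rwa [(hD2 i).2.2] at h1
  -- the inverse map P (one full step of the discrete dynamics)
  have hPspec : ∀ i x, 0 ≤ x → ∃ y, 0 < y ∧ dp i y = k i (R i x) := by
    intro i x hx
    obtain ⟨X, hX0, hXv⟩ := (hA6 i).2
    refine exists_pos_preimage (hD1 i).2.1.continuousOn (hD2 i).2.1 (hkpos i x hx) hX0
      (lt_of_le_of_lt ?_ hXv)
    exact (hD3 i).2.2.monotoneOn (Set.mem_Ici.mpr (hRprop i x hx).1.le)
      (Set.mem_Ici.mpr (hrbar_pos i).le) (hRle i x hx)
  obtain ⟨P, hPprop⟩ : ∃ P : Fin n → ℝ → ℝ, ∀ i x, 0 ≤ x →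
      0 < P i x ∧ dp i (P i x) = k i (R i x) :=
    ⟨fun i x => pInv (dp i) (k i (R i x)), fun i x hx => pInv_spec (hPspec i x hx)⟩
  have hPanti : ∀ i x y, 0 ≤ x → x < y → P i y < P i x := by
    intro i x y hx hxy
    have hy : (0:ℝ) ≤ y := le_trans hx hxy.le
    have h2 : R i y < R i x := by
      refine hltr (dr i) (hD3 i).1 (hRprop i y hy).1.le (hRprop i x hx).1.le ?_
      rw [(hRprop i y hy).2, (hRprop i x hx).2]
      exact haanti i x y hx hxy
    have h3 : k i (R i y) < k i (R i x) := (hD3 i).2.2 (Set.mem_Ici.mpr (hRprop i y hy).1.le)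
      (Set.mem_Ici.mpr (hRprop i x hx).1.le) h2
    refine hltr (dp i) (hD3 i).2.1 (hPprop i y hy).1.le (hPprop i x hx).1.le ?_
    rw [(hPprop i y hy).2, (hPprop i x hx).2]
    exact h3
  have hPcont : ∀ i, ContinuousOn (P i) (Set.Ici 0) := by
    intro i
    have hRc : ContinuousOn (R i) (Set.Ici 0) :=
      continuousOn_inv_comp (hD3 i).1 (fun x hx => (hRprop i x hx).1)
        (fun x hx => (hRprop i x hx).2) (hacont i)
    have hkRc : ContinuousOn (fun x => k i (R i x)) (Set.Ici 0) :=
      ContinuousOn.comp (hD1 i).2.2.continuousOn hRc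
        (fun x hx => Set.mem_Ici.mpr (hRprop i x hx).1.le)
    exact continuousOn_inv_comp (hD3 i).2.1 (fun x hx => (hPprop i x hx).1)
      (fun x hx => (hPprop i x hx).2) hkRc
  -- the iterated map
  set u : ℕ → ℝ → ℝ := iterChain n P with hu
  have husucc : ∀ j x, u (j + 1) x = P ((j : ℕ) : Fin n) (u j x) := fun j x => rfl
  have hupos : ∀ j x, 0 ≤ x → 0 ≤ u j x ∧ (1 ≤ j → 0 < u j x) := by
    intro j
    induction j with
    | zero => intro x hx; exact ⟨hx, by omega⟩
    | succ j ih =>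
      intro x hx
      have h0 := (ih x hx).1
      have h1 := (hPprop ((j : ℕ) : Fin n) (u j x) h0).1
      rw [← husucc] at h1
      exact ⟨h1.le, fun _ => h1⟩
  have hucont : ∀ j, ContinuousOn (u j) (Set.Ici 0) := by
    intro j
    induction j with
    | zero => exact continuousOn_id
    | succ j ih =>
      show ContinuousOn (fun x => P ((j : ℕ) : Fin n) (u j x)) (Set.Ici 0)
      exact ContinuousOn.comp (hPcont _) ih (fun x hx => Set.mem_Ici.mpr (hupos j x hx).1)
  have humono : ∀ j, (Odd j → ∀ x y, 0 ≤ x → x < y → u j y < u j x) ∧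
      (Even j → ∀ x y, 0 ≤ x → x < y → u j x < u j y) := by
    intro j
    induction j with
    | zero =>
      exact ⟨fun h => absurd h (by simp), fun _ x y _ hxy => hxy⟩
    | succ j ih =>
      constructor
      · intro hodd x y hx hxy
        have hje : Even j := Nat.Odd.sub_odd hodd odd_one
        have h1 : u j x < u j y := ih.2 hje x y hx hxy
        rw [husucc, husucc]
        exact hPanti _ _ _ (hupos j x hx).1 h1
      · intro heven x y hx hxy
        have hjo : Odd j := Nat.Even.sub_odd (by omega) heven odd_one
        have h1 : u j y < u j x := ih.1 hjo x y hx hxy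
        rw [husucc, husucc]
        exact hPanti _ _ _ (hupos j y (le_trans hx hxy.le)).1 h1
  have hFanti : ∀ x y, 0 ≤ x → x < y → u n y < u n x := (humono n).1 hn
  -- existence of the fixed point c
  have hM0 : 0 < u n 0 := (hupos n 0 le_rfl).2 npos
  have hFle : ∀ x, 0 ≤ x → u n x ≤ u n 0 := by
    intro x hx
    rcases eq_or_lt_of_le hx with h | h
    · rw [← h]
    · exact (hFanti 0 x le_rfl h).le
  have hcsub : ContinuousOn (fun x => u n x - x) (Set.Icc 0 (u n 0)) :=
    ((hucont n).mono Set.Icc_subset_Ici_self).sub continuousOn_id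
  have hIVT := intermediate_value_Icc' hM0.le hcsub
  have h0mem : (0:ℝ) ∈ Set.Icc (u n (u n 0) - u n 0) (u n 0 - 0) := by
    constructor
    · have := hFle (u n 0) hM0.le
      linarith
    · simp only [sub_zero]
      exact hM0.le
  obtain ⟨c, hcmem, hceq⟩ := hIVT h0mem
  have hc0 : 0 ≤ c := hcmem.1
  have hfix : u n c = c := by
    have : u n c - c = 0 := hceq
    linarith
  have hcpos : 0 < c := by
    have := (hupos n c hc0).2 npos
    rwa [hfix] at this
  -- uniqueness of the fixed point
  have hfixuniq : ∀ y, 0 ≤ y → u n y = y → y = c := by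
    intro y hy hfy
    rcases lt_trichotomy y c with h | h | h
    · have := hFanti y c hy h
      rw [hfix, hfy] at this
      linarith
    · exact h
    · have := hFanti c y hc0 h
      rw [hfix, hfy] at this
      linarith
  -- the candidate steady state
  have hps_pos : ∀ i : Fin n, 0 < u ((i : ℕ) + 1) c := fun i => (hupos _ c hc0).2 (by omega)
  have hshift : ∀ i : Fin n, u (((i - 1 : Fin n) : ℕ) + 1) c = u (i : ℕ) c := by
    intro i
    rw [fin_sub_one_val]
    by_cases hi : (i : ℕ) = 0
    · rw [if_pos hi, hi]
      have h1 : n - 1 + 1 = n := by omega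
      rw [h1]
      exact hfix
    · rw [if_neg hi]
      congr 1
      omega
  have hp_succ : ∀ i : Fin n, u ((i : ℕ) + 1) c = P i (u (((i - 1 : Fin n) : ℕ) + 1) c) := by
    intro i
    rw [hshift i, husucc, Fin.cast_val_eq_self]
  refine ⟨(fun i => R i (u (((i - 1 : Fin n) : ℕ) + 1) c),
    fun i => u (((i : Fin n) : ℕ) + 1) c), ?_, ?_⟩
  · refine ⟨fun i => (hRprop i _ (hps_pos (i - 1)).le).1, fun i => hps_pos i,
      fun i => (hRprop i _ (hps_pos (i - 1)).le).2, fun i => ?_⟩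
    dsimp only
    rw [hp_succ i]
    exact (hPprop i _ (hps_pos (i - 1)).le).2
  · rintro ⟨r, p⟩ ⟨hrpos, hppos, hsr, hsp⟩
    dsimp only at hrpos hppos hsr hsp
    have hr_eq : ∀ i, r i = R i (p (i - 1)) := by
      intro i
      refine hinj (dr i) (hD3 i).1 (hrpos i).le (hRprop i _ (hppos (i - 1)).le).1.le ?_
      rw [(hRprop i _ (hppos (i - 1)).le).2]
      exact hsr i
    have hp_eq : ∀ i, p i = P i (p (i - 1)) := by
      intro i
      refine hinj (dp i) (hD3 i).2.1 (hppos i).le (hPprop i _ (hppos (i - 1)).le).1.le ?_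
      rw [(hPprop i _ (hppos (i - 1)).le).2, hsp i, hr_eq i]
    have hkey : ∀ j, j ≤ n → u j (p (0 - 1)) = p (((j : ℕ) : Fin n) - 1) := by
      intro j
      induction j with
      | zero =>
        intro _
        simp only [Nat.cast_zero]
        rfl
      | succ j ih =>
        intro hj
        have hj' : j ≤ n := by omega
        calc u (j + 1) (p (0 - 1)) = P ((j : ℕ) : Fin n) (u j (p (0 - 1))) := husucc j _
          _ = P ((j : ℕ) : Fin n) (p (((j : ℕ) : Fin n) - 1)) := by rw [ih hj']
          _ = p ((j : ℕ) : Fin n) := (hp_eq _).symm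
          _ = p ((((j + 1 : ℕ)) : Fin n) - 1) := by
              rw [Nat.cast_add, Nat.cast_one, add_sub_cancel_right]
    have hfixy : u n (p (0 - 1)) = p (0 - 1) := by
      have h := hkey n le_rfl
      rwa [Fin.natCast_self] at h
    have hyc : p (0 - 1) = c := hfixuniq _ (hppos _).le hfixy
    have hp_all : ∀ i : Fin n, p i = u ((i : ℕ) + 1) c := by
      intro i
      have h1 := hkey ((i : ℕ) + 1) (by omega)
      have h2 : ((((i : ℕ) + 1 : ℕ)) : Fin n) - 1 = i := by
        rw [Nat.cast_add, Nat.cast_one, Fin.cast_val_eq_self, add_sub_cancel_right]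
      rw [h2, hyc] at h1
      exact h1.symm
    refine Prod.ext ?_ ?_
    · funext i
      show r i = R i (u (((i - 1 : Fin n) : ℕ) + 1) c)
      rw [hr_eq i, hp_all (i - 1)]
    · funext i
      show p i = u (((i : Fin n) : ℕ) + 1) c
      exact hp_all i
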